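/- arXiv:2603.19038 — 3 statements merged into one kernel-verified Lean document; each statement's English description precedes it below -/
import Mathlib

section
/- Let d ≥ 3 and let 0 < δ < 1. Let G be a d-regular graph on n vertices such that every vertex subset U with |U| ≤ log^{C+1} n satisfies e(U) ≤ (1+δ)|U|, where e(U) denotes the number of edges inside U. Then every vertex subset U with |U| ≤ log^C n satisfies |N_G(U)| ≥ (d/(1+δ) − 2)|U|. -/
/-- The external neighborhood of a vertex set `U`. -/
def SimpleGraph.extNbhd {V : Type*} (G : SimpleGraph V) (U : Set V) : Set V :=
  {v | v ∉ U ∧ ∃ u ∈ U, G.Adj u v}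

/-- The set of edges of `G` with both endpoints in `U`. -/
def SimpleGraph.edgesIn {V : Type*} (G : SimpleGraph V) (U : Set V) : Set (Sym2 V) :=
  {e | e ∈ G.edgeSet ∧ ∀ v ∈ e, v ∈ U}

lemma key_count {V : Type*} [Fintype V] (G : SimpleGraph V) [DecidableRel G.Adj] (d : ℕ)
    (hreg : G.IsRegularOfDegree d) (U : Set V) :
    d * U.ncard ≤ (G.edgesIn (U ∪ G.extNbhd U)).ncard + (G.edgesIn U).ncard := by
  classical
  set W := U ∪ G.extNbhd U with hW
  set Uf : Finset V := (Set.toFinite U).toFinset with hUf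
  set T : Finset (Sym2 V) := (Set.toFinite (G.edgesIn W)).toFinset with hT
  set TU : Finset (Sym2 V) := (Set.toFinite (G.edgesIn U)).toFinset with hTU
  set I : Finset (V × V) := Finset.univ.filter (fun p => p.1 ∈ U ∧ G.Adj p.1 p.2) with hI
  have hfibu : ∀ u ∈ Uf, (I.filter (fun p => p.1 = u)).card = d := by
    intro u hu
    have hu' : u ∈ U := by simpa [hUf, Set.Finite.mem_toFinset] using hu
    have heq : I.filter (fun p => p.1 = u) = (G.neighborFinset u).image (fun v => (u, v)) := by
      ext p
      simp only [hI, Finset.mem_filter, Finset.mem_univ, true_and, Finset.mem_image,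
        SimpleGraph.mem_neighborFinset]
      constructor
      · rintro ⟨⟨hp1, hadj⟩, h1⟩
        exact ⟨p.2, by simpa [h1] using hadj, by simp [← h1]⟩
      · rintro ⟨v, hv, rfl⟩
        exact ⟨⟨hu', hv⟩, rfl⟩
    rw [heq, Finset.card_image_of_injective _ (fun a b h => by simpa using h)]
    simpa using hreg u
  have hIcard : I.card = d * Uf.card := by
    rw [Finset.card_eq_sum_card_fiberwise (f := Prod.fst) (t := Uf)
      (fun p hp => by
        simp only [hI, Finset.mem_coe, Finset.mem_filter] at hp
        simp only [hUf, Finset.mem_coe, Set.Finite.mem_toFinset]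
        exact hp.2.1)]
    rw [Finset.sum_congr rfl hfibu, Finset.sum_const, smul_eq_mul, mul_comm]
  have hmemT : ∀ p ∈ I, s(p.1, p.2) ∈ T := by
    intro p hp
    simp only [hI, Finset.mem_filter] at hp
    obtain ⟨-, hp1, hadj⟩ := hp
    simp only [hT, Set.Finite.mem_toFinset]
    refine ⟨hadj, ?_⟩
    intro v hv
    rw [Sym2.mem_iff] at hv
    rcases hv with rfl | rfl
    · exact Or.inl hp1
    · by_cases h2 : p.2 ∈ U
      · exact Or.inl h2
      · exact Or.inr ⟨h2, p.1, hp1, hadj⟩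
  have hIle : I.card ≤ T.card + TU.card := by
    rw [Finset.card_eq_sum_card_fiberwise hmemT]
    have hfib : ∀ e ∈ T, (I.filter (fun p => s(p.1, p.2) = e)).card ≤
        if e ∈ TU then 2 else 1 := by
      intro e he
      induction e using Sym2.ind with
      | _ a b =>
        by_cases heU : s(a, b) ∈ TU
        · rw [if_pos heU]
          have hsub : I.filter (fun p => s(p.1, p.2) = s(a, b)) ⊆
              ({(a, b), (b, a)} : Finset (V × V)) := by
            intro p hp
            simp only [Finset.mem_filter] at hp
            have := hp.2
            rw [Sym2.eq_iff] at this
            simp only [Finset.mem_insert, Finset.mem_singleton]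
            rcases this with ⟨h1, h2⟩ | ⟨h1, h2⟩
            · exact Or.inl (Prod.ext h1 h2)
            · exact Or.inr (Prod.ext h1 h2)
          exact (Finset.card_le_card hsub).trans
            ((Finset.card_insert_le _ _).trans (by simp))
        · rw [if_neg heU]
          simp only [hT, hTU, Set.Finite.mem_toFinset, SimpleGraph.edgesIn, Set.mem_setOf_eq,
            not_and, not_forall] at he heU
          obtain ⟨v, hv, hvU⟩ := heU he.1
          rw [Sym2.mem_iff] at hv
          rcases hv with rfl | rfl
          · have hsub : I.filter (fun p => s(p.1, p.2) = s(v, b)) ⊆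
                ({(b, v)} : Finset (V × V)) := by
              intro p hp
              simp only [hI, Finset.mem_filter, Finset.mem_univ, true_and] at hp
              obtain ⟨⟨hp1, -⟩, heq⟩ := hp
              rw [Sym2.eq_iff] at heq
              simp only [Finset.mem_singleton]
              rcases heq with ⟨h1, h2⟩ | ⟨h1, h2⟩
              · exact absurd (h1 ▸ hp1) hvU
              · exact Prod.ext h1 h2
            exact (Finset.card_le_card hsub).trans (by simp)
          · have hsub : I.filter (fun p => s(p.1, p.2) = s(a, v)) ⊆
                ({(a, v)} : Finset (V × V)) := by
              intro p hp
              simp only [hI, Finset.mem_filter, Finset.mem_univ, true_and] at hp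
              obtain ⟨⟨hp1, -⟩, heq⟩ := hp
              rw [Sym2.eq_iff] at heq
              simp only [Finset.mem_singleton]
              rcases heq with ⟨h1, h2⟩ | ⟨h1, h2⟩
              · exact Prod.ext h1 h2
              · exact absurd (h1 ▸ hp1) hvU
            exact (Finset.card_le_card hsub).trans (by simp)
    calc ∑ e ∈ T, (I.filter (fun p => s(p.1, p.2) = e)).card
        ≤ ∑ e ∈ T, (if e ∈ TU then 2 else 1) := Finset.sum_le_sum hfib
      _ = ∑ e ∈ T, (1 + if e ∈ TU then 1 else 0) := by
          apply Finset.sum_congr rfl; intro e _; split <;> simp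
      _ = T.card + (T.filter (fun e => e ∈ TU)).card := by
          rw [Finset.sum_add_distrib, Finset.sum_const, smul_eq_mul, mul_one,
            Finset.card_filter]
      _ ≤ T.card + TU.card := by
          gcongr
          intro e he
          exact (Finset.mem_filter.mp he).2
  have h1 : U.ncard = Uf.card := Set.ncard_eq_toFinset_card _ _
  have h2 : (G.edgesIn W).ncard = T.card := Set.ncard_eq_toFinset_card _ _
  have h3 : (G.edgesIn U).ncard = TU.card := Set.ncard_eq_toFinset_card _ _
  rw [h1, h2, h3]
  omega

theorem stmt4 {V : Type*} [Fintype V] (G : SimpleGraph V) [DecidableRel G.Adj]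
    (n d : ℕ) (hn : n = Fintype.card V) (hd : 3 ≤ d)
    (hreg : G.IsRegularOfDegree d) (δ C : ℝ) (hδ : 0 < δ) (hδ1 : δ < 1)
    (hdlog : (d : ℝ) * (Real.log n) ^ C ≤ (Real.log n) ^ (C + 1))
    (hsparse : ∀ U : Set V, (U.ncard : ℝ) ≤ (Real.log n) ^ (C + 1) →
      ((G.edgesIn U).ncard : ℝ) ≤ (1 + δ) * U.ncard) :
    ∀ U : Set V, (U.ncard : ℝ) ≤ (Real.log n) ^ C →
      ((d : ℝ) / (1 + δ) - 2) * U.ncard ≤ ((G.extNbhd U).ncard : ℝ) := by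
  intro U hU
  set u : ℝ := (U.ncard : ℝ) with hu
  set a : ℝ := ((G.extNbhd U).ncard : ℝ) with ha
  have hu0 : 0 ≤ u := Nat.cast_nonneg _
  have ha0 : 0 ≤ a := Nat.cast_nonneg _
  have hδ' : (0:ℝ) < 1 + δ := by linarith
  -- log nonneg and powers nonneg
  have hlog0 : 0 ≤ Real.log n := by
    rcases Nat.eq_zero_or_pos n with h | h
    · simp [h]
    · exact Real.log_nonneg (by exact_mod_cast h)
  have hLC0 : 0 ≤ (Real.log n) ^ C := Real.rpow_nonneg hlog0 _
  have hCC1 : (Real.log n) ^ C ≤ (Real.log n) ^ (C + 1) := by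
    have h3 : (3:ℝ) ≤ (d:ℝ) := by exact_mod_cast hd
    nlinarith [hdlog]
  by_cases hcase : ((d : ℝ) / (1 + δ) - 2) * u ≤ a
  · exact hcase
  push_neg at hcase
  -- then U ∪ N(U) is small enough to apply sparsity
  have hdd : (d:ℝ) / (1 + δ) ≤ (d:ℝ) := by
    apply div_le_self (Nat.cast_nonneg _)
    linarith
  have hwu : ((U ∪ G.extNbhd U).ncard : ℝ) ≤ u + a := by
    rw [hu, ha]
    have := Set.ncard_union_le U (G.extNbhd U)
    exact_mod_cast this
  have hWsmall : ((U ∪ G.extNbhd U).ncard : ℝ) ≤ (Real.log n) ^ (C + 1) := by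
    have h1 : ((U ∪ G.extNbhd U).ncard : ℝ) ≤ (d:ℝ) * u := by
      have : u + a ≤ u + ((d : ℝ) / (1 + δ) - 2) * u := by linarith
      have h2 : u + ((d : ℝ) / (1 + δ) - 2) * u ≤ (d:ℝ) * u := by nlinarith
      linarith
    calc ((U ∪ G.extNbhd U).ncard : ℝ) ≤ (d:ℝ) * u := h1
      _ ≤ (d:ℝ) * (Real.log n) ^ C := by
          apply mul_le_mul_of_nonneg_left hU (Nat.cast_nonneg _)
      _ ≤ (Real.log n) ^ (C + 1) := hdlog
  have hUsmall : (u : ℝ) ≤ (Real.log n) ^ (C + 1) := le_trans hU hCC1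
  have hsW := hsparse _ hWsmall
  have hsU := hsparse _ hUsmall
  have hkey := key_count G d hreg U
  have hkey' : (d:ℝ) * u ≤ ((G.edgesIn (U ∪ G.extNbhd U)).ncard : ℝ)
      + ((G.edgesIn U).ncard : ℝ) := by rw [hu]; exact_mod_cast hkey
  have hmain : (d:ℝ) * u ≤ (1 + δ) * (2 * u + a) := by
    calc (d:ℝ) * u ≤ ((G.edgesIn (U ∪ G.extNbhd U)).ncard : ℝ)
        + ((G.edgesIn U).ncard : ℝ) := hkey'
      _ ≤ (1 + δ) * ((U ∪ G.extNbhd U).ncard : ℝ) + (1 + δ) * u := by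
          gcongr
      _ ≤ (1 + δ) * (u + a) + (1 + δ) * u := by nlinarith
      _ = (1 + δ) * (2 * u + a) := by ring
  have : (d:ℝ) / (1 + δ) * u ≤ 2 * u + a := by
    rw [div_mul_eq_mul_div, div_le_iff₀ hδ']
    nlinarith
  nlinarith
end

section
/- Let δ > 0 and let G be a d-regular graph (d ≥ 3) on n vertices in which every vertex subset U with |U| ≤ 3/(4δ) satisfies e(U) ≤ (1+δ)|U|. Then any two cycles in G each of length at most 1/(4δ) are at graph distance at least 1/(4δ) from each other. -/
open SimpleGraph

section Aux

-- Deleting an edge lying on a cycle preserves connectivity.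
private lemma del_edge_connected {W : Type*} {H : SimpleGraph W} (hconn : H.Connected)
    {v : W} (c : H.Walk v v) (hc : c.IsCycle) {e : Sym2 W} (he : e ∈ c.edges) :
    (H \ SimpleGraph.fromEdgeSet {e}).Connected := by
  have key : ∀ {x y : W} (q : H.Walk x y), (H \ SimpleGraph.fromEdgeSet {e}).Reachable x y := by
    intro x y q
    induction q with
    | nil => exact Reachable.refl _
    | @cons a b cc h q ih =>
      refine Reachable.trans ?_ ih
      by_cases hxy : s(a, b) = e
      · subst hxy
        exact (SimpleGraph.adj_and_reachable_delete_edges_iff_exists_cycle.mpr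
          ⟨v, c, hc, he⟩).2
      · exact Adj.reachable (by
          rw [SimpleGraph.sdiff_adj]
          refine ⟨h, ?_⟩
          rw [SimpleGraph.fromEdgeSet_adj]
          rintro ⟨hmem, -⟩
          exact hxy (Set.mem_singleton_iff.mp hmem))
  rw [SimpleGraph.connected_iff]
  refine ⟨fun x y => ?_, hconn.nonempty⟩
  obtain ⟨q⟩ := hconn.preconnected x y
  exact key q

private lemma del_edge_edgeSet {W : Type*} (H : SimpleGraph W) {e : Sym2 W}
    (he : e ∈ H.edgeSet) :
    (H \ SimpleGraph.fromEdgeSet {e}).edgeSet = H.edgeSet \ {e} := by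
  rw [SimpleGraph.edgeSet_sdiff, SimpleGraph.edgeSet_fromEdgeSet]
  ext f
  simp only [Set.mem_diff, Set.mem_singleton_iff, Set.mem_setOf_eq]
  constructor
  · rintro ⟨hf, hf2⟩
    refine ⟨hf, fun h => hf2 ⟨h, ?_⟩⟩
    subst h
    exact SimpleGraph.not_isDiag_of_mem_edgeSet _ hf
  · rintro ⟨hf, hf2⟩
    exact ⟨hf, fun h => hf2 h.1⟩

-- A connected graph has at least (card - 1) edges.
private lemma conn_card_le {W : Type*} [Fintype W] :
    ∀ (n : ℕ) (H : SimpleGraph W), H.edgeSet.ncard = n → H.Connected →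
      Fintype.card W ≤ n + 1 := by
  intro n
  induction n using Nat.strong_induction_on with
  | _ n ih =>
    intro H hn hconn
    by_cases hac : H.IsAcyclic
    · classical
      haveI : Fintype H.edgeSet := (Set.toFinite _).fintype
      haveI : DecidableRel H.Adj := Classical.decRel _
      have ht : H.IsTree := ⟨hconn, hac⟩
      have := ht.card_edgeFinset
      have hcard : H.edgeFinset.card = n := by
        rw [← hn, SimpleGraph.edgeFinset, Set.ncard_eq_toFinset_card']
      omega
    · rw [SimpleGraph.IsAcyclic] at hac
      push_neg at hac
      obtain ⟨v, c, hc⟩ := hac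
      have hlen : c.edges ≠ [] := by
        have h3 := hc.three_le_length
        have := c.length_edges
        intro h
        rw [h] at this
        simp at this
        omega
      obtain ⟨e, he⟩ := List.exists_mem_of_ne_nil _ hlen
      have heH : e ∈ H.edgeSet := c.edges_subset_edgeSet he
      have hpos : 1 ≤ n := by
        rw [← hn]
        exact (Set.ncard_pos (Set.toFinite _)).mpr ⟨e, heH⟩
      have hconn' := del_edge_connected hconn c hc he
      have hn' : (H \ SimpleGraph.fromEdgeSet {e}).edgeSet.ncard = n - 1 := by
        rw [del_edge_edgeSet H heH, ← hn,
          Set.ncard_diff_singleton_of_mem heH]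
      have := ih (n - 1) (by omega) _ hn' hconn'
      omega

-- A connected graph with a cycle has at least card edges.
private lemma conn_cycle_card_le {W : Type*} [Fintype W] (H : SimpleGraph W)
    (hconn : H.Connected) {v : W} (c : H.Walk v v) (hc : c.IsCycle) :
    Fintype.card W ≤ H.edgeSet.ncard := by
  have hlen : c.edges ≠ [] := by
    have h3 := hc.three_le_length
    have := c.length_edges
    intro h; rw [h] at this; simp at this; omega
  obtain ⟨e, he⟩ := List.exists_mem_of_ne_nil _ hlen
  have heH : e ∈ H.edgeSet := c.edges_subset_edgeSet he
  have hconn' := del_edge_connected hconn c hc he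
  have hA := conn_card_le ((H \ SimpleGraph.fromEdgeSet {e}).edgeSet.ncard) _ rfl hconn'
  rw [del_edge_edgeSet H heH, Set.ncard_diff_singleton_of_mem heH] at hA
  have hpos : 1 ≤ H.edgeSet.ncard := (Set.ncard_pos (Set.toFinite _)).mpr ⟨e, heH⟩
  omega

-- A connected graph with two edge-distinct cycles has at least card+1 edges.
private lemma conn_two_cycles_card_le {W : Type*} [Fintype W] (H : SimpleGraph W)
    (hconn : H.Connected)
    {a b : W} (c₁ : H.Walk a a) (c₂ : H.Walk b b) (h₁ : c₁.IsCycle) (h₂ : c₂.IsCycle)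
    {e : Sym2 W} (he₁ : e ∈ c₁.edges) (he₂ : e ∉ c₂.edges) :
    Fintype.card W + 1 ≤ H.edgeSet.ncard := by
  have heH : e ∈ H.edgeSet := c₁.edges_subset_edgeSet he₁
  have hconn' := del_edge_connected hconn c₁ h₁ he₁
  have hsub : ∀ f ∈ c₂.edges, f ∈ (H \ SimpleGraph.fromEdgeSet {e}).edgeSet := by
    intro f hf
    rw [del_edge_edgeSet H heH]
    exact ⟨c₂.edges_subset_edgeSet hf, fun h => he₂ (h ▸ hf)⟩
  have hB := conn_cycle_card_le _ hconn' (c₂.transfer _ hsub) (h₂.transfer hsub)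
  rw [del_edge_edgeSet H heH, Set.ncard_diff_singleton_of_mem heH] at hB
  have hpos : 1 ≤ H.edgeSet.ncard := (Set.ncard_pos (Set.toFinite _)).mpr ⟨e, heH⟩
  omega

variable {V : Type*} {G : SimpleGraph V}

/-- Inclusion hom from an induced subgraph. -/
private def inclHom (G : SimpleGraph V) (s : Set V) : G.induce s →g G :=
  ⟨Subtype.val, fun {_ _} h => h⟩

private def liftWalk {s : Set V} :
    ∀ {u v : V} (p : G.Walk u v) (hu : u ∈ s) (hv : v ∈ s)
      (_ : ∀ x ∈ p.support, x ∈ s), (G.induce s).Walk ⟨u, hu⟩ ⟨v, hv⟩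
  | _, _, SimpleGraph.Walk.nil, _, _, _ => SimpleGraph.Walk.nil
  | _, _, @SimpleGraph.Walk.cons _ _ a b v h q, hu, hv, hp =>
      SimpleGraph.Walk.cons
        (show (G.induce s).Adj ⟨a, hu⟩ ⟨b, hp b (by simp)⟩ from h)
        (liftWalk q (hp b (by simp)) hv (fun x hx => hp x (by simp [hx])))

private lemma liftWalk_map {s : Set V} :
    ∀ {u v : V} (p : G.Walk u v) (hu : u ∈ s) (hv : v ∈ s)
      (hp : ∀ x ∈ p.support, x ∈ s),
      (liftWalk p hu hv hp).map (inclHom G s) = p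
  | _, _, SimpleGraph.Walk.nil, _, _, _ => by simp [liftWalk]; rfl
  | _, _, @SimpleGraph.Walk.cons _ _ a b v h q, hu, hv, hp => by
      simp only [liftWalk, SimpleGraph.Walk.map_cons]
      exact congrArg _ (liftWalk_map q _ _ _)

private lemma liftWalk_isCycle {s : Set V} {u : V} (c : G.Walk u u) (hc : c.IsCycle)
    (hu : u ∈ s) (hp : ∀ x ∈ c.support, x ∈ s) :
    (liftWalk c hu hu hp).IsCycle := by
  have hinj : Function.Injective (inclHom G s) := Subtype.val_injective
  rw [← SimpleGraph.Walk.map_isCycle_iff_of_injective hinj, liftWalk_map]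
  exact hc

private lemma liftWalk_edges {s : Set V} {u v : V} (p : G.Walk u v)
    (hu : u ∈ s) (hv : v ∈ s) (hp : ∀ x ∈ p.support, x ∈ s) :
    (liftWalk p hu hv hp).edges.map (Sym2.map Subtype.val) = p.edges := by
  conv_rhs => rw [← liftWalk_map p hu hv hp]
  exact (SimpleGraph.Walk.edges_map (inclHom G s) (liftWalk p hu hv hp)).symm

private lemma setOf_mem_list_ncard {α : Type*} (l : List α) :
    {v | v ∈ l}.ncard ≤ l.length := by
  classical
  rw [show {v | v ∈ l} = ↑l.toFinset by ext; simp, Set.ncard_coe_finset]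
  exact l.toFinset_card_le

private lemma cycle_support_eq {u : V} (c : G.Walk u u) (hc : c.IsCycle) :
    {v | v ∈ c.support} = {v | v ∈ c.support.tail} := by
  cases c with
  | nil => exact absurd hc (SimpleGraph.Walk.IsCycle.not_of_nil)
  | @cons _ b _ h q =>
    ext v
    simp only [SimpleGraph.Walk.support_cons, List.mem_cons, Set.mem_setOf_eq, List.tail_cons]
    constructor
    · rintro (rfl | hv)
      · exact q.end_mem_support
      · exact hv
    · exact Or.inr

private lemma cycle_support_ncard {u : V} (c : G.Walk u u) (hc : c.IsCycle) :
    {v | v ∈ c.support}.ncard ≤ c.length := by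
  rw [cycle_support_eq c hc]
  have h := setOf_mem_list_ncard c.support.tail
  have hlen : c.support.tail.length = c.length := by
    rw [List.length_tail, SimpleGraph.Walk.length_support]
    omega
  omega

end Aux

theorem stmt6 {V : Type*} [Fintype V] (G : SimpleGraph V) [DecidableRel G.Adj]
    (d : ℕ) (hd : 3 ≤ d) (hreg : G.IsRegularOfDegree d) (δ : ℝ) (hδ0 : 0 < δ) (hδ1 : δ < 1)
    (hsparse : ∀ U : Set V, (U.ncard : ℝ) ≤ 3 / (4 * δ) →
      ((G.edgesIn U).ncard : ℝ) ≤ (1 + δ) * U.ncard)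
    {u w : V} (c₁ : G.Walk u u) (c₂ : G.Walk w w)
    (h₁ : c₁.IsCycle) (h₂ : c₂.IsCycle)
    (hl₁ : (c₁.length : ℝ) ≤ 1 / (4 * δ)) (hl₂ : (c₂.length : ℝ) ≤ 1 / (4 * δ))
    (hne : {e | e ∈ c₁.edges} ≠ {e | e ∈ c₂.edges}) :
    ∀ x ∈ c₁.support, ∀ y ∈ c₂.support, ∀ p : G.Walk x y,
      1 / (4 * δ) ≤ (p.length : ℝ) := by
  classical
  intro x hx y hy p
  by_contra hlt
  push_neg at hlt
  -- the vertex set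
  set s₁ : Set V := {v | v ∈ c₁.support} with hs₁
  set sp : Set V := {v | v ∈ p.support} with hsp
  set s₂ : Set V := {v | v ∈ c₂.support} with hs₂
  set Uset : Set V := s₁ ∪ sp ∪ s₂ with hUset
  -- size bound on Uset
  have hxs₁ : x ∈ s₁ := hx
  have hys₂ : y ∈ s₂ := hy
  have hUsub : Uset ⊆ s₁ ∪ {v | v ∈ p.support.tail} ∪ s₂ := by
    intro v hv
    rcases hv with (hv | hv) | hv
    · exact Or.inl (Or.inl hv)
    · rw [hsp, Set.mem_setOf_eq, p.support_eq_cons, List.mem_cons] at hv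
      rcases hv with rfl | hv
      · exact Or.inl (Or.inl hxs₁)
      · exact Or.inl (Or.inr hv)
    · exact Or.inr hv
  have htail : p.support.tail.length = p.length := by
    rw [List.length_tail, SimpleGraph.Walk.length_support]
    omega
  have hUcard : (Uset.ncard : ℝ) ≤ (c₁.length : ℝ) + p.length + c₂.length := by
    have h1 := cycle_support_ncard c₁ h₁
    have h2 := cycle_support_ncard c₂ h₂
    rw [← hs₁] at h1
    rw [← hs₂] at h2
    have hp' := setOf_mem_list_ncard p.support.tail
    have hle : Uset.ncard ≤ c₁.length + p.length + c₂.length := by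
      calc Uset.ncard ≤ (s₁ ∪ {v | v ∈ p.support.tail} ∪ s₂).ncard :=
            Set.ncard_le_ncard hUsub (Set.toFinite _)
        _ ≤ (s₁ ∪ {v | v ∈ p.support.tail}).ncard + s₂.ncard := Set.ncard_union_le _ _
        _ ≤ s₁.ncard + {v | v ∈ p.support.tail}.ncard + s₂.ncard := by
            have := Set.ncard_union_le s₁ {v | v ∈ p.support.tail}
            omega
        _ ≤ c₁.length + p.length + c₂.length := by omega
    exact_mod_cast hle
  have hU3 : (Uset.ncard : ℝ) ≤ 3 / (4 * δ) := by
    have h3 : (3 : ℝ) / (4 * δ) = 1 / (4 * δ) + 1 / (4 * δ) + 1 / (4 * δ) := by ring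
    rw [h3]
    linarith
  -- connectivity of the induced graph
  have hconn : (G.induce Uset).Connected := by
    have C1 : (G.induce s₁).Connected := c₁.connected_induce_support
    have Cp : (G.induce sp).Connected := p.connected_induce_support
    have C2 : (G.induce s₂).Connected := c₂.connected_induce_support
    have C1p : (G.induce (s₁ ∪ sp)).Connected :=
      SimpleGraph.induce_union_connected C1.preconnected Cp.preconnected ⟨x, hxs₁, p.start_mem_support⟩
    exact SimpleGraph.induce_union_connected C1p.preconnected C2.preconnected
      ⟨y, Or.inr p.end_mem_support, hys₂⟩
  -- membership of supports in Uset
  have hsub₁ : ∀ v ∈ c₁.support, v ∈ Uset := fun v hv => Or.inl (Or.inl hv)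
  have hsubp : ∀ v ∈ p.support, v ∈ Uset := fun v hv => Or.inl (Or.inr hv)
  have hsub₂ : ∀ v ∈ c₂.support, v ∈ Uset := fun v hv => Or.inr hv
  have hu : u ∈ Uset := hsub₁ u c₁.start_mem_support
  have hw : w ∈ Uset := hsub₂ w c₂.start_mem_support
  -- lifted cycles
  haveI : Fintype ↥Uset := (Set.toFinite Uset).fintype
  set lc₁ := liftWalk c₁ hu hu hsub₁ with hlc₁def
  set lc₂ := liftWalk c₂ hw hw hsub₂ with hlc₂def
  have hlc₁ : lc₁.IsCycle := liftWalk_isCycle c₁ h₁ hu hsub₁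
  have hlc₂ : lc₂.IsCycle := liftWalk_isCycle c₂ h₂ hw hsub₂
  -- a distinguishing edge
  have hediff : (∃ e, e ∈ c₁.edges ∧ e ∉ c₂.edges) ∨ (∃ e, e ∈ c₂.edges ∧ e ∉ c₁.edges) := by
    by_contra hcon
    push_neg at hcon
    exact hne (Set.ext fun e => ⟨fun h => hcon.1 e h, fun h => hcon.2 e h⟩)
  -- key counting inequality
  have hkey : Fintype.card ↥Uset + 1 ≤ ((G.induce Uset).edgeSet).ncard := by
    rcases hediff with ⟨e, he1, he2⟩ | ⟨e, he1, he2⟩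
    · rw [← liftWalk_edges c₁ hu hu hsub₁] at he1
      obtain ⟨e', he', rfl⟩ := List.mem_map.mp he1
      have he2' : e' ∉ lc₂.edges := fun h => he2 (by
        rw [← liftWalk_edges c₂ hw hw hsub₂]
        exact List.mem_map_of_mem h)
      exact conn_two_cycles_card_le _ hconn lc₁ lc₂ hlc₁ hlc₂ he' he2'
    · rw [← liftWalk_edges c₂ hw hw hsub₂] at he1
      obtain ⟨e', he', rfl⟩ := List.mem_map.mp he1
      have he2' : e' ∉ lc₁.edges := fun h => he2 (by
        rw [← liftWalk_edges c₁ hu hu hsub₁]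
        exact List.mem_map_of_mem h)
      exact conn_two_cycles_card_le _ hconn lc₂ lc₁ hlc₂ hlc₁ he' he2'
  have hcardU : Fintype.card ↥Uset = Uset.ncard := by
    rw [Set.ncard_eq_toFinset_card', Set.toFinset_card]
  -- edges of induced graph inject into edgesIn
  have hinj2 : Function.Injective (Sym2.map (Subtype.val : ↥Uset → V)) :=
    Sym2.map.injective Subtype.val_injective
  have himg : (Sym2.map (Subtype.val : ↥Uset → V)) '' (G.induce Uset).edgeSet ⊆
      G.edgesIn Uset := by
    rintro e' ⟨e, he, rfl⟩
    induction e with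
    | _ a b =>
      rw [SimpleGraph.mem_edgeSet] at he
      refine ⟨?_, ?_⟩
      · exact he
      · intro v hv
        rw [Sym2.map_pair_eq, Sym2.mem_iff] at hv
        rcases hv with rfl | rfl
        · exact a.2
        · exact b.2
  have hE : ((G.induce Uset).edgeSet).ncard ≤ (G.edgesIn Uset).ncard := by
    rw [← Set.ncard_image_of_injective _ hinj2]
    refine Set.ncard_le_ncard himg ?_
    exact Set.Finite.subset (Set.toFinite G.edgeSet) (fun e he => he.1)
  -- finish with arithmetic
  have hs := hsparse Uset hU3
  have hfinal : (Uset.ncard : ℝ) + 1 ≤ ((G.edgesIn Uset).ncard : ℝ) := by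
    have : Uset.ncard + 1 ≤ (G.edgesIn Uset).ncard := by
      rw [← hcardU]; omega
    exact_mod_cast this
  have hδU : δ * Uset.ncard ≤ 3 / 4 := by
    have := mul_le_mul_of_nonneg_left hU3 (le_of_lt hδ0)
    calc δ * Uset.ncard ≤ δ * (3 / (4 * δ)) := this
      _ = 3 / 4 := by field_simp
  nlinarith [hfinal, hs, hδU]
end

section
/- Let G be a d-regular graph on n vertices satisfying: for every U ⊆ V with |U| ≤ n/2, e(U, Uᶜ) ≥ c₁|U|; and suppose every vertex of G is within distance L of a set W. Then for every partition of W into two parts A, B (each a union of components of some subgraph), with a = |A| ≤ |B|, there exist at least c₁·a / d^{2L+1} vertex-disjoint paths in G of length at most 2L+1 between A and B (disjoint outside of A and B). -/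
/-- The set of edges of `G` with one endpoint in `U` and one endpoint in `W`. -/
def SimpleGraph.edgesBetween {V : Type*} (G : SimpleGraph V) (U W : Set V) : Set (Sym2 V) :=
  {e | e ∈ G.edgeSet ∧ ∃ x ∈ U, ∃ y ∈ W, e = s(x, y)}

open Set

namespace Stmt15Aux

lemma twoL_le {d L : ℕ} (hd : 2 ≤ d) : 2 * L ≤ d ^ L := by
  induction L with
  | zero => simp
  | succ L ih =>
    rcases Nat.eq_zero_or_pos L with rfl | hL
    · simpa using hd
    · have h2 : 2 ≤ d ^ L := le_trans hd (Nat.le_self_pow hL.ne' d)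
      calc 2 * (L + 1) = 2 * L + 2 := by ring
        _ ≤ d ^ L + d ^ L := add_le_add ih h2
        _ = 2 * d ^ L := by ring
        _ ≤ d * d ^ L := Nat.mul_le_mul_right _ hd
        _ = d ^ (L + 1) := by rw [pow_succ]; ring

lemma geom_le {d L : ℕ} (hd : 2 ≤ d) : (∑ i ∈ Finset.range L, d ^ i) ≤ d ^ L := by
  induction L with
  | zero => simp
  | succ L ih =>
    rw [Finset.sum_range_succ]
    calc (∑ i ∈ Finset.range L, d ^ i) + d ^ L ≤ d ^ L + d ^ L := by omega
      _ = 2 * d ^ L := by ring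
      _ ≤ d * d ^ L := Nat.mul_le_mul_right _ hd
      _ = d ^ (L + 1) := by rw [pow_succ]; ring

lemma ncard_biUnion_le {α β : Type*} (I : Finset α) (f : α → Set β) :
    (⋃ x ∈ I, f x).ncard ≤ ∑ x ∈ I, (f x).ncard := by
  classical
  induction I using Finset.induction with
  | empty => simp
  | @insert a s ha ih =>
    rw [Finset.set_biUnion_insert, Finset.sum_insert ha]
    exact le_trans (Set.ncard_union_le _ _) (by omega)

lemma incidence_ncard_le {V : Type*} [Fintype V] (G : SimpleGraph V) [DecidableRel G.Adj]
    {d : ℕ} (hreg : G.IsRegularOfDegree d) (v : V) : (G.incidenceSet v).ncard ≤ d := by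
  classical
  have hsub : G.incidenceSet v ⊆ (fun w => s(v, w)) '' G.neighborSet v := by
    rintro e ⟨he, hve⟩
    induction e with
    | _ x y =>
      rcases Sym2.mem_iff.mp hve with rfl | rfl
      · exact ⟨y, he, rfl⟩
      · exact ⟨x, G.mem_edgeSet.mp he |>.symm, Sym2.eq_swap⟩
  calc (G.incidenceSet v).ncard ≤ ((fun w => s(v, w)) '' G.neighborSet v).ncard :=
        Set.ncard_le_ncard hsub (Set.toFinite _)
    _ ≤ (G.neighborSet v).ncard := Set.ncard_image_le (Set.toFinite _)
    _ = G.degree v := by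
        rw [Set.ncard_eq_toFinset_card', Set.toFinset_card, G.card_neighborSet_eq_degree]
    _ = d := hreg v


lemma exists_rank_parent {V : Type*} (G : SimpleGraph V) (L : ℕ) (W : Set V)
    (hclose : ∀ v : V, ∃ w ∈ W, ∃ p : G.Walk v w, p.length ≤ L) :
    ∃ (r : V → ℕ) (pa : V → V),
      (∀ v, r v ≤ L) ∧ (∀ v, r v = 0 → v ∈ W) ∧ (∀ v, r v = 0 → pa v = v) ∧
      (∀ v, 0 < r v → G.Adj v (pa v) ∧ r (pa v) < r v) ∧
      (∀ v, ∃ w ∈ W, ∃ p : G.Walk v w, p.length ≤ L ∧ ∀ x ∈ p.support, ∃ i, pa^[i] v = x) := by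
  classical
  set S : V → Set ℕ := fun v => {ℓ | ∃ w ∈ W, ∃ p : G.Walk v w, p.length = ℓ} with hS
  have hne : ∀ v, (S v).Nonempty := by
    intro v
    obtain ⟨w, hw, p, _⟩ := hclose v
    exact ⟨p.length, w, hw, p, rfl⟩
  set r : V → ℕ := fun v => sInf (S v) with hr
  have hrle : ∀ v, r v ≤ L := by
    intro v
    obtain ⟨w, hw, p, hp⟩ := hclose v
    exact le_trans (Nat.sInf_le ⟨w, hw, p, rfl⟩) hp
  have hrmem : ∀ v, r v ∈ S v := fun v => Nat.sInf_mem (hne v)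
  have hr0 : ∀ v, r v = 0 → v ∈ W := by
    intro v hv
    obtain ⟨w, hw, p, hp⟩ := hrmem v
    rw [hv] at hp
    exact (SimpleGraph.Walk.eq_of_length_eq_zero hp) ▸ hw
  have hpar : ∀ v, 0 < r v → ∃ u, G.Adj v u ∧ r u < r v := by
    intro v hv
    obtain ⟨w, hw, p, hp⟩ := hrmem v
    cases p with
    | nil => simp at hp; omega
    | cons h q =>
      refine ⟨_, h, ?_⟩
      have : r _ ≤ q.length := Nat.sInf_le ⟨w, hw, q, rfl⟩
      simp only [SimpleGraph.Walk.length_cons] at hp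
      omega
  set pa : V → V := fun v => if h : 0 < r v then (hpar v h).choose else v with hpa
  have hpa0 : ∀ v, r v = 0 → pa v = v := by
    intro v hv; simp [hpa, hv]
  have hpas : ∀ v, 0 < r v → G.Adj v (pa v) ∧ r (pa v) < r v := by
    intro v hv
    simp only [hpa, dif_pos hv]
    exact (hpar v hv).choose_spec
  refine ⟨r, pa, hrle, hr0, hpa0, hpas, ?_⟩
  have key : ∀ m, ∀ v, r v ≤ m →
      ∃ w ∈ W, ∃ p : G.Walk v w, p.length ≤ r v ∧ ∀ x ∈ p.support, ∃ i, pa^[i] v = x := by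
    intro m
    induction m with
    | zero =>
      intro v hv
      have hv0 : r v = 0 := by omega
      refine ⟨v, hr0 v hv0, SimpleGraph.Walk.nil, by simp, ?_⟩
      intro x hx
      simp only [SimpleGraph.Walk.support_nil, List.mem_singleton] at hx
      exact ⟨0, hx.symm⟩
    | succ m ih =>
      intro v hv
      rcases Nat.eq_zero_or_pos (r v) with hv0 | hvpos
      · refine ⟨v, hr0 v hv0, SimpleGraph.Walk.nil, by simp, ?_⟩
        intro x hx
        simp only [SimpleGraph.Walk.support_nil, List.mem_singleton] at hx
        exact ⟨0, hx.symm⟩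
      · obtain ⟨hadj, hlt⟩ := hpas v hvpos
        obtain ⟨w, hw, q, hql, hqs⟩ := ih (pa v) (by omega)
        refine ⟨w, hw, SimpleGraph.Walk.cons hadj q, ?_, ?_⟩
        · simp only [SimpleGraph.Walk.length_cons]; omega
        · intro x hx
          rw [SimpleGraph.Walk.support_cons, List.mem_cons] at hx
          rcases hx with rfl | hx
          · exact ⟨0, rfl⟩
          · obtain ⟨i, hi⟩ := hqs x hx
            exact ⟨i + 1, by rw [Function.iterate_succ_apply]; exact hi⟩
  intro v
  obtain ⟨w, hw, p, hpl, hps⟩ := key (r v) v le_rfl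
  exact ⟨w, hw, p, le_trans hpl (hrle v), hps⟩


lemma extension {V : Type*} [Fintype V] (G : SimpleGraph V) [DecidableRel G.Adj]
    (n d : ℕ) (hn : n = Fintype.card V) (hreg : G.IsRegularOfDegree d)
    (c₁ : ℝ) (hc₁ : 0 < c₁)
    (hexp : ∀ U : Set V, (U.ncard : ℝ) ≤ n / 2 →
      c₁ * U.ncard ≤ ((G.edgesBetween U Uᶜ).ncard : ℝ))
    (L : ℕ) (W : Set V)
    (hclose : ∀ v : V, ∃ w ∈ W, ∃ p : G.Walk v w, p.length ≤ L)
    (A B : Set V) (hAB : A ∪ B = W) (hABdisj : Disjoint A B)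
    (hle : A.ncard ≤ B.ncard)
    (X : Set V) (hXW : ∀ x ∈ X, x ∉ A ∪ B)
    (hsmall : (d : ℝ) * (∑ i ∈ Finset.range L, (d : ℝ) ^ i) * X.ncard < c₁ * A.ncard) :
    ∃ a ∈ A, ∃ b ∈ B, ∃ p : G.Walk a b, p.length ≤ 2 * L + 1 ∧ ∀ x ∈ p.support, x ∉ X := by
  classical
  by_contra hcon
  push_neg at hcon
  -- clean reach sets
  set RA : Set V := {v | ∃ a ∈ A, ∃ p : G.Walk a v, p.length ≤ L ∧ ∀ x ∈ p.support, x ∉ X}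
    with hRA
  set RB : Set V := {v | ∃ b ∈ B, ∃ p : G.Walk v b, p.length ≤ L ∧ ∀ x ∈ p.support, x ∉ X}
    with hRB
  have hAsub : A ⊆ RA := by
    intro a ha
    refine ⟨a, ha, SimpleGraph.Walk.nil, by simp, ?_⟩
    intro x hx
    simp only [SimpleGraph.Walk.support_nil, List.mem_singleton] at hx
    subst hx
    exact fun hX => hXW _ hX (Or.inl ha)
  have hBsub : B ⊆ RB := by
    intro b hb
    refine ⟨b, hb, SimpleGraph.Walk.nil, by simp, ?_⟩
    intro x hx
    simp only [SimpleGraph.Walk.support_nil, List.mem_singleton] at hx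
    subst hx
    exact fun hX => hXW _ hX (Or.inr hb)
  have hglue : ∀ v, v ∈ RA → v ∈ RB → False := by
    rintro v ⟨a, ha, p, hpl, hps⟩ ⟨b, hb, q, hql, hqs⟩
    obtain ⟨x, hx, hxX⟩ := hcon a ha b hb (p.append q)
      (by rw [SimpleGraph.Walk.length_append]; omega)
    rcases (SimpleGraph.Walk.mem_support_append_iff _ _).mp hx with h | h
    · exact hps x h hxX
    · exact hqs x h hxX
  have hnoadj : ∀ u ∈ RA, ∀ y ∈ RB, ¬ G.Adj u y := by
    rintro u ⟨a, ha, p, hpl, hps⟩ y ⟨b, hb, q, hql, hqs⟩ hadj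
    obtain ⟨x, hx, hxX⟩ := hcon a ha b hb (p.append (SimpleGraph.Walk.cons hadj q))
      (by rw [SimpleGraph.Walk.length_append, SimpleGraph.Walk.length_cons]; omega)
    rcases (SimpleGraph.Walk.mem_support_append_iff _ _).mp hx with h | h
    · exact hps x h hxX
    · rw [SimpleGraph.Walk.support_cons, List.mem_cons] at h
      rcases h with heq | h
      · exact hps u p.end_mem_support (heq ▸ hxX)
      · exact hqs x h hxX
  obtain ⟨r, pa, hrle, hr0, hpa0, hpas, hwalk⟩ := exists_rank_parent G L W hclose
  -- vertices whose parent-orbit hits X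
  set Z' : Set V := {z | ∃ x ∈ X, ∃ i, pa^[i] z = x} with hZ'
  have hcover : ∀ v, v ∈ RA ∨ v ∈ RB ∨ v ∈ Z' := by
    intro v
    by_cases hvA : v ∈ RA
    · exact Or.inl hvA
    by_cases hvB : v ∈ RB
    · exact Or.inr (Or.inl hvB)
    refine Or.inr (Or.inr ?_)
    obtain ⟨w, hw, p, hpl, hps⟩ := hwalk v
    by_cases hclean : ∀ x ∈ p.support, x ∉ X
    · exfalso
      rw [← hAB] at hw
      rcases hw with hwA | hwB
      · exact hvA ⟨w, hwA, p.reverse, by rw [SimpleGraph.Walk.length_reverse]; omega,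
          fun x hx => hclean x (by rwa [SimpleGraph.Walk.support_reverse, List.mem_reverse] at hx)⟩
      · exact hvB ⟨w, hwB, p, hpl, hclean⟩
    · push_neg at hclean
      obtain ⟨x, hx, hxX⟩ := hclean
      exact ⟨x, hxX, hps x hx⟩
  -- rank of X-vertices is positive
  have hXpos : ∀ x ∈ X, 0 < r x := by
    intro x hx
    rcases Nat.eq_zero_or_pos (r x) with h0 | h
    · exact absurd (hAB ▸ hr0 x h0) (hXW x hx)
    · exact h
  -- D x i : vertices reaching x in exactly i parent steps, all ranks positive along the way
  set D : V → ℕ → Set V :=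
    fun x i => {z | pa^[i] z = x ∧ ∀ j ≤ i, 0 < r (pa^[j] z)} with hD
  have hDcard : ∀ x, ∀ i, (D x i).ncard ≤ d ^ i := by
    intro x i
    induction i with
    | zero =>
      have : D x 0 ⊆ {x} := by rintro z ⟨hz, _⟩; simpa using hz
      simpa using le_trans (Set.ncard_le_ncard this (Set.toFinite _)) (Set.ncard_singleton x).le
    | succ i ih =>
      have hsub : D x (i + 1) ⊆ ⋃ y ∈ (D x i).toFinite.toFinset, G.neighborSet y := by
        rintro z ⟨hz, hranks⟩
        have hpaz : pa z ∈ D x i := by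
          constructor
          · rw [← Function.iterate_succ_apply]; exact hz
          · intro j hj
            rw [← Function.iterate_succ_apply]
            exact hranks (j + 1) (by omega)
        have hz0 : 0 < r z := by simpa using hranks 0 (by omega)
        have hadj : G.Adj z (pa z) := (hpas z hz0).1
        refine Set.mem_biUnion ((D x i).toFinite.mem_toFinset.mpr hpaz) hadj.symm
      calc (D x (i + 1)).ncard ≤ (⋃ y ∈ (D x i).toFinite.toFinset, G.neighborSet y).ncard :=
            Set.ncard_le_ncard hsub (Set.toFinite _)
        _ ≤ ∑ y ∈ (D x i).toFinite.toFinset, (G.neighborSet y).ncard := ncard_biUnion_le _ _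
        _ = ∑ y ∈ (D x i).toFinite.toFinset, d := by
            refine Finset.sum_congr rfl fun y _ => ?_
            rw [Set.ncard_eq_toFinset_card', Set.toFinset_card, G.card_neighborSet_eq_degree]
            exact hreg y
        _ = (D x i).toFinite.toFinset.card * d := by rw [Finset.sum_const, smul_eq_mul]
        _ = (D x i).ncard * d := by rw [Set.ncard_eq_toFinset_card _ (D x i).toFinite]
        _ ≤ d ^ i * d := Nat.mul_le_mul_right _ ih
        _ = d ^ (i + 1) := (pow_succ d i).symm
  -- chain lemma: membership in Z' gives membership in some D x i with i < L
  have hchain : ∀ i z x, pa^[i] z = x → 0 < r x → ∃ i', i' + r x ≤ r z ∧ z ∈ D x i' := by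
    intro i
    induction i with
    | zero =>
      intro z x hz hx
      subst hz
      exact ⟨0, by simpa using le_rfl, by simp [hD], fun j hj => by simpa [Nat.le_zero.mp hj] using hx⟩
    | succ i ih =>
      intro z x hz hx
      rcases Nat.eq_zero_or_pos (r z) with hz0 | hzpos
      · rw [Function.iterate_succ_apply, hpa0 z hz0] at hz
        exact ih z x hz hx
      · rw [Function.iterate_succ_apply] at hz
        obtain ⟨i', hi'1, hi'2⟩ := ih (pa z) x hz hx
        refine ⟨i' + 1, ?_, ?_, ?_⟩
        · have := (hpas z hzpos).2
          omega
        · rw [Function.iterate_succ_apply]; exact hi'2.1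
        · intro j hj
          cases j with
          | zero => simpa using hzpos
          | succ j =>
            rw [Function.iterate_succ_apply]
            exact hi'2.2 j (by omega)
  have hZ'sub : Z' ⊆ ⋃ x ∈ X.toFinite.toFinset, ⋃ i ∈ Finset.range L, D x i := by
    rintro z ⟨x, hxX, i, hi⟩
    obtain ⟨i', hi'1, hi'2⟩ := hchain i z x hi (hXpos x hxX)
    have hiL : i' < L := by have := hrle z; have := hXpos x hxX; omega
    exact Set.mem_biUnion (X.toFinite.mem_toFinset.mpr hxX)
      (Set.mem_biUnion (Finset.mem_range.mpr hiL) hi'2)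
  have hZ'card : Z'.ncard ≤ X.ncard * ∑ i ∈ Finset.range L, d ^ i := by
    calc Z'.ncard ≤ (⋃ x ∈ X.toFinite.toFinset, ⋃ i ∈ Finset.range L, D x i).ncard :=
          Set.ncard_le_ncard hZ'sub (Set.toFinite _)
      _ ≤ ∑ x ∈ X.toFinite.toFinset, (⋃ i ∈ Finset.range L, D x i).ncard :=
          ncard_biUnion_le _ _
      _ ≤ ∑ x ∈ X.toFinite.toFinset, ∑ i ∈ Finset.range L, (D x i).ncard :=
          Finset.sum_le_sum fun x _ => ncard_biUnion_le _ _
      _ ≤ ∑ x ∈ X.toFinite.toFinset, ∑ i ∈ Finset.range L, d ^ i :=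
          Finset.sum_le_sum fun x _ => Finset.sum_le_sum fun i _ => hDcard x i
      _ = X.toFinite.toFinset.card * ∑ i ∈ Finset.range L, d ^ i := by
          rw [Finset.sum_const, smul_eq_mul]
      _ = X.ncard * ∑ i ∈ Finset.range L, d ^ i := by
          rw [Set.ncard_eq_toFinset_card _ X.toFinite]
  -- the main counting argument
  have count : ∀ S T : Set V, Disjoint S T → (∀ u ∈ S, ∀ y ∈ T, ¬ G.Adj u y) →
      A.ncard ≤ S.ncard → S.ncard ≤ T.ncard → (∀ v, v ∈ S ∨ v ∈ T ∨ v ∈ Z') → False := by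
    intro S T hST hadj hSa hSsmall hcov
    have h2S : 2 * S.ncard ≤ n := by
      have hun : (S ∪ T).ncard = S.ncard + T.ncard := Set.ncard_union_eq hST
      have : (S ∪ T).ncard ≤ n := by
        rw [hn, ← Nat.card_eq_fintype_card, ← Set.ncard_univ V]
        exact Set.ncard_le_ncard (Set.subset_univ _) (Set.toFinite _)
      omega
    have hhalf : (S.ncard : ℝ) ≤ n / 2 := by
      have : (2 * S.ncard : ℝ) ≤ n := by exact_mod_cast h2S
      linarith
    have hEsub : G.edgesBetween S Sᶜ ⊆ ⋃ z ∈ Z'.toFinite.toFinset, G.incidenceSet z := by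
      rintro e ⟨he, x, hxS, y, hyS, rfl⟩
      have hadjxy : G.Adj x y := G.mem_edgeSet.mp he
      have hyZ : y ∈ Z' := by
        rcases hcov y with h | h | h
        · exact absurd h hyS
        · exact absurd hadjxy (hadj x hxS y h)
        · exact h
      exact Set.mem_biUnion (Z'.toFinite.mem_toFinset.mpr hyZ) ⟨he, Sym2.mem_mk_right x y⟩
    have hEcard : (G.edgesBetween S Sᶜ).ncard ≤ Z'.ncard * d := by
      calc (G.edgesBetween S Sᶜ).ncard
          ≤ (⋃ z ∈ Z'.toFinite.toFinset, G.incidenceSet z).ncard :=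
            Set.ncard_le_ncard hEsub (Set.toFinite _)
        _ ≤ ∑ z ∈ Z'.toFinite.toFinset, (G.incidenceSet z).ncard := ncard_biUnion_le _ _
        _ ≤ ∑ z ∈ Z'.toFinite.toFinset, d :=
            Finset.sum_le_sum fun z _ => incidence_ncard_le G hreg z
        _ = Z'.toFinite.toFinset.card * d := by rw [Finset.sum_const, smul_eq_mul]
        _ = Z'.ncard * d := by rw [Set.ncard_eq_toFinset_card _ Z'.toFinite]
    have hnat : (G.edgesBetween S Sᶜ).ncard ≤ X.ncard * (∑ i ∈ Finset.range L, d ^ i) * d :=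
      le_trans hEcard (Nat.mul_le_mul_right _ hZ'card)
    have hchainR : c₁ * A.ncard ≤ (d : ℝ) * (∑ i ∈ Finset.range L, (d : ℝ) ^ i) * X.ncard := by
      calc c₁ * A.ncard ≤ c₁ * S.ncard := by
            have : (A.ncard : ℝ) ≤ S.ncard := by exact_mod_cast hSa
            nlinarith
        _ ≤ ((G.edgesBetween S Sᶜ).ncard : ℝ) := hexp S hhalf
        _ ≤ (X.ncard * (∑ i ∈ Finset.range L, d ^ i) * d : ℕ) := by exact_mod_cast hnat
        _ = (d : ℝ) * (∑ i ∈ Finset.range L, (d : ℝ) ^ i) * X.ncard := by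
            push_cast; ring
    linarith
  rcases le_total RA.ncard RB.ncard with hc | hc
  · exact count RA RB (Set.disjoint_left.mpr fun v hvA hvB => hglue v hvA hvB)
      hnoadj (Set.ncard_le_ncard hAsub (Set.toFinite _)) hc hcover
  · refine count RB RA (Set.disjoint_left.mpr fun v hvB hvA => hglue v hvA hvB)
      (fun u hu y hy hadj => hnoadj y hy u hu hadj.symm)
      (le_trans hle (Set.ncard_le_ncard hBsub (Set.toFinite _))) hc ?_
    intro v
    rcases hcover v with h | h | h
    · exact Or.inr (Or.inl h)
    · exact Or.inl h
    · exact Or.inr (Or.inr h)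


lemma build {V : Type*} [Fintype V] (G : SimpleGraph V) [DecidableRel G.Adj]
    (n d : ℕ) (hn : n = Fintype.card V) (hreg : G.IsRegularOfDegree d)
    (c₁ : ℝ) (hc₁ : 0 < c₁)
    (hexp : ∀ U : Set V, (U.ncard : ℝ) ≤ n / 2 →
      c₁ * U.ncard ≤ ((G.edgesBetween U Uᶜ).ncard : ℝ))
    (L : ℕ) (W : Set V)
    (hclose : ∀ v : V, ∃ w ∈ W, ∃ p : G.Walk v w, p.length ≤ L)
    (A B : Set V) (hAB : A ∪ B = W) (hABdisj : Disjoint A B)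
    (hle : A.ncard ≤ B.ncard) :
    ∀ m : ℕ,
      (∀ k : ℕ, k < m →
        (d : ℝ) * (∑ i ∈ Finset.range L, (d : ℝ) ^ i) * ((2 * L * k : ℕ) : ℝ) < c₁ * A.ncard) →
      ∃ P : Fin m → Σ u : V, Σ v : V, G.Walk u v,
        (∀ i, (P i).1 ∈ A) ∧ (∀ i, (P i).2.1 ∈ B) ∧
        (∀ i, (P i).2.2.length ≤ 2 * L + 1) ∧
        (∀ i, (P i).2.2.IsPath) ∧
        (∀ i j, i ≠ j → ∀ x, x ∈ (P i).2.2.support → x ∈ (P j).2.2.support →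
          x ∈ A ∪ B) := by
  classical
  intro m
  induction m with
  | zero =>
    intro _
    exact ⟨fun i => i.elim0, fun i => i.elim0, fun i => i.elim0, fun i => i.elim0,
      fun i => i.elim0, fun i => i.elim0⟩
  | succ m ih =>
    intro hnum
    obtain ⟨P, hP1, hP2, hP3, hP4, hP5⟩ := ih (fun k hk => hnum k (by omega))
    -- the set of internal vertices used so far
    set X : Set V := ⋃ i : Fin m, ({x | x ∈ (P i).2.2.support} \ (A ∪ B)) with hX
    have hXW : ∀ x ∈ X, x ∉ A ∪ B := by
      intro x hx
      obtain ⟨i, hi⟩ := Set.mem_iUnion.mp hx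
      exact hi.2
    -- each path contributes at most 2L vertices to X
    have hone : ∀ i : Fin m, ({x | x ∈ (P i).2.2.support} \ (A ∪ B)).ncard ≤ 2 * L := by
      intro i
      rcases hPi : P i with ⟨u, v, p⟩
      have hu : u ∈ A := by have := hP1 i; rwa [hPi] at this
      have hv : v ∈ B := by have := hP2 i; rwa [hPi] at this
      have hlen : p.length ≤ 2 * L + 1 := by have := hP3 i; rwa [hPi] at this
      simp only [hPi]
      have hne : u ≠ v := fun h => Set.disjoint_left.mp hABdisj hu (h ▸ hv)
      have hsub : {x | x ∈ p.support} \ (A ∪ B) ⊆ {x | x ∈ p.support} \ ({u, v} : Set V) := by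
        apply Set.diff_subset_diff_right
        rintro z (rfl | rfl)
        · exact Or.inl hu
        · exact Or.inr hv
      have hpairsub : ({u, v} : Set V) ⊆ {x | x ∈ p.support} := by
        rintro z (rfl | rfl)
        · exact p.start_mem_support
        · exact p.end_mem_support
      have hcards : ({x | x ∈ p.support}).ncard ≤ 2 * L + 2 := by
        have h1 : {x | x ∈ p.support} = (↑p.support.toFinset : Set V) := by
          ext z; simp
        rw [h1, Set.ncard_coe_finset]
        calc p.support.toFinset.card ≤ p.support.length := p.support.toFinset_card_le
          _ = p.length + 1 := p.length_support
          _ ≤ 2 * L + 2 := by omega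
      calc ({x | x ∈ p.support} \ (A ∪ B)).ncard
          ≤ ({x | x ∈ p.support} \ ({u, v} : Set V)).ncard :=
            Set.ncard_le_ncard hsub (Set.toFinite _)
        _ = ({x | x ∈ p.support}).ncard - ({u, v} : Set V).ncard :=
            Set.ncard_diff hpairsub (Set.toFinite _)
        _ ≤ 2 * L := by
            rw [Set.ncard_pair hne]
            omega
    have hXcard : X.ncard ≤ 2 * L * m := by
      have hsub : X ⊆ ⋃ i ∈ (Finset.univ : Finset (Fin m)),
          ({x | x ∈ (P i).2.2.support} \ (A ∪ B)) := by
        intro x hx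
        obtain ⟨i, hi⟩ := Set.mem_iUnion.mp hx
        exact Set.mem_biUnion (Finset.mem_univ i) hi
      calc X.ncard ≤ _ := Set.ncard_le_ncard hsub (Set.toFinite _)
        _ ≤ ∑ i ∈ (Finset.univ : Finset (Fin m)),
              ({x | x ∈ (P i).2.2.support} \ (A ∪ B)).ncard := ncard_biUnion_le _ _
        _ ≤ ∑ _i ∈ (Finset.univ : Finset (Fin m)), 2 * L :=
            Finset.sum_le_sum fun i _ => hone i
        _ = m * (2 * L) := by simp [Finset.sum_const, mul_comm]
        _ = 2 * L * m := by ring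
    have hsmall : (d : ℝ) * (∑ i ∈ Finset.range L, (d : ℝ) ^ i) * X.ncard < c₁ * A.ncard := by
      have h1 : (X.ncard : ℝ) ≤ ((2 * L * m : ℕ) : ℝ) := by exact_mod_cast hXcard
      have h2 : (0 : ℝ) ≤ (d : ℝ) * (∑ i ∈ Finset.range L, (d : ℝ) ^ i) := by positivity
      calc (d : ℝ) * (∑ i ∈ Finset.range L, (d : ℝ) ^ i) * X.ncard
          ≤ (d : ℝ) * (∑ i ∈ Finset.range L, (d : ℝ) ^ i) * ((2 * L * m : ℕ) : ℝ) := by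
            exact mul_le_mul_of_nonneg_left h1 h2
        _ < c₁ * A.ncard := hnum m (by omega)
    obtain ⟨a, ha, b, hb, p, hpl, hps⟩ :=
      extension G n d hn hreg c₁ hc₁ hexp L W hclose A B hAB hABdisj hle X hXW hsmall
    set q : G.Walk a b := p.bypass with hq
    have hqsup : ∀ x ∈ q.support, x ∉ X := fun x hx => hps x (p.support_bypass_subset hx)
    refine ⟨Fin.cases ⟨a, b, q⟩ P, ?_, ?_, ?_, ?_, ?_⟩
    · intro i
      rcases Fin.eq_zero_or_eq_succ i with rfl | ⟨i', rfl⟩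
      · simpa using ha
      · simpa using hP1 i'
    · intro i
      rcases Fin.eq_zero_or_eq_succ i with rfl | ⟨i', rfl⟩
      · simpa using hb
      · simpa using hP2 i'
    · intro i
      rcases Fin.eq_zero_or_eq_succ i with rfl | ⟨i', rfl⟩
      · simpa using le_trans p.length_bypass_le hpl
      · simpa using hP3 i'
    · intro i
      rcases Fin.eq_zero_or_eq_succ i with rfl | ⟨i', rfl⟩
      · simpa using p.bypass_isPath
      · simpa using hP4 i'
    · intro i j hij x hxi hxj
      rcases Fin.eq_zero_or_eq_succ i with rfl | ⟨i', rfl⟩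
      · rcases Fin.eq_zero_or_eq_succ j with rfl | ⟨j', rfl⟩
        · exact absurd rfl hij
        · simp only [Fin.cases_zero] at hxi
          simp only [Fin.cases_succ] at hxj
          by_contra hxAB
          exact hqsup x hxi (Set.mem_iUnion.mpr ⟨j', hxj, hxAB⟩)
      · rcases Fin.eq_zero_or_eq_succ j with rfl | ⟨j', rfl⟩
        · simp only [Fin.cases_succ] at hxi
          simp only [Fin.cases_zero] at hxj
          by_contra hxAB
          exact hqsup x hxj (Set.mem_iUnion.mpr ⟨i', hxi, hxAB⟩)
        · simp only [Fin.cases_succ] at hxi hxj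
          exact hP5 i' j' (fun h => hij (by rw [h])) x hxi hxj


end Stmt15Aux

open Stmt15Aux in
theorem stmt15 {V : Type*} [Fintype V] (G : SimpleGraph V) [DecidableRel G.Adj]
    (n d : ℕ) (hn : n = Fintype.card V) (hreg : G.IsRegularOfDegree d)
    (c₁ : ℝ) (hc₁ : 0 < c₁)
    (hexp : ∀ U : Set V, (U.ncard : ℝ) ≤ n / 2 →
      c₁ * U.ncard ≤ ((G.edgesBetween U Uᶜ).ncard : ℝ))
    (L : ℕ) (W : Set V)
    (hclose : ∀ v : V, ∃ w ∈ W, ∃ p : G.Walk v w, p.length ≤ L)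
    (A B : Set V) (hAB : A ∪ B = W) (hABdisj : Disjoint A B)
    (hle : A.ncard ≤ B.ncard) :
    ∃ k : ℕ, c₁ * A.ncard / (d : ℝ) ^ (2 * L + 1) ≤ k ∧
      ∃ P : Fin k → Σ u : V, Σ v : V, G.Walk u v,
        (∀ i, (P i).1 ∈ A) ∧ (∀ i, (P i).2.1 ∈ B) ∧
        (∀ i, (P i).2.2.length ≤ 2 * L + 1) ∧
        (∀ i, (P i).2.2.IsPath) ∧
        (∀ i j, i ≠ j → ∀ x, x ∈ (P i).2.2.support → x ∈ (P j).2.2.support →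
          x ∈ A ∪ B) := by
  classical
  by_cases hA0 : A.ncard = 0
  · refine ⟨0, by rw [hA0]; simp, fun i => i.elim0, fun i => i.elim0, fun i => i.elim0,
      fun i => i.elim0, fun i => i.elim0, fun i => i.elim0⟩
  -- A is nonempty
  obtain ⟨x, hx⟩ := Set.nonempty_of_ncard_ne_zero hA0
  have hBne : B.ncard ≠ 0 := by omega
  obtain ⟨y, hy⟩ := Set.nonempty_of_ncard_ne_zero hBne
  have hxy : x ≠ y := fun h => Set.disjoint_left.mp hABdisj hx (h ▸ hy)
  have hn2 : 2 ≤ n := by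
    rw [hn]
    exact Fintype.one_lt_card_iff.mpr ⟨x, y, hxy⟩
  match d with
  | 0 =>
    refine ⟨0, by simp, fun i => i.elim0, fun i => i.elim0, fun i => i.elim0,
      fun i => i.elim0, fun i => i.elim0, fun i => i.elim0⟩
  | 1 =>
    -- 1-regular graph: A must be a single vertex and c₁ ≤ 1
    by_cases hA2 : 2 ≤ A.ncard
    · -- contradiction: a matched pair has no outgoing edges
      exfalso
      obtain ⟨mx, hmx⟩ := Finset.card_eq_one.mp (hreg x)
      have hadj : G.Adj x mx := by
        rw [← SimpleGraph.mem_neighborFinset, hmx]; exact Finset.mem_singleton_self mx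
      have hNm : G.neighborFinset mx = {x} := by
        apply Finset.eq_singleton_iff_unique_mem.mpr
        refine ⟨(SimpleGraph.mem_neighborFinset _ _ _).mpr hadj.symm, ?_⟩
        intro z hz
        have h1 := hreg mx
        rw [SimpleGraph.degree] at h1
        have hxm : x ∈ G.neighborFinset mx :=
          (SimpleGraph.mem_neighborFinset _ _ _).mpr hadj.symm
        exact Finset.card_le_one.mp (le_of_eq h1) z hz x hxm
      set U : Set V := {x, mx} with hU
      have hUcard : U.ncard = 2 := Set.ncard_pair (G.ne_of_adj hadj)
      have hn4 : 4 ≤ n := by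
        have hABcard : (A ∪ B).ncard = A.ncard + B.ncard := Set.ncard_union_eq hABdisj
        have hABn : (A ∪ B).ncard ≤ n := by
          rw [hn, ← Nat.card_eq_fintype_card, ← Set.ncard_univ V]
          exact Set.ncard_le_ncard (Set.subset_univ _) (Set.toFinite _)
        omega
      have hhalf : ((U.ncard : ℝ)) ≤ n / 2 := by
        rw [hUcard]
        have : (4 : ℝ) ≤ n := by exact_mod_cast hn4
        linarith
      have hempty : G.edgesBetween U Uᶜ = ∅ := by
        ext e
        simp only [Set.mem_empty_iff_false, iff_false]
        rintro ⟨he, p, hp, q, hq, rfl⟩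
        have hadjpq : G.Adj p q := G.mem_edgeSet.mp he
        rcases hp with rfl | rfl
        · have : q ∈ G.neighborFinset p := (SimpleGraph.mem_neighborFinset _ _ _).mpr hadjpq
          rw [hmx] at this
          exact hq (Or.inr (Finset.mem_singleton.mp this))
        · have : q ∈ G.neighborFinset p := (SimpleGraph.mem_neighborFinset _ _ _).mpr hadjpq
          rw [hNm] at this
          exact hq (Or.inl (Finset.mem_singleton.mp this))
      have := hexp U hhalf
      rw [hempty, hUcard] at this
      simp at this
      nlinarith
    · -- A.ncard = 1
      have hA1 : A.ncard = 1 := by omega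
      have hc₁1 : c₁ ≤ 1 := by
        have hhalf : ((({x} : Set V).ncard : ℝ)) ≤ n / 2 := by
          rw [Set.ncard_singleton]
          have : (2 : ℝ) ≤ n := by exact_mod_cast hn2
          linarith
        have h1 := hexp {x} hhalf
        have hsub : G.edgesBetween {x} ({x} : Set V)ᶜ ⊆ G.incidenceSet x := by
          rintro e ⟨he, p, hp, q, hq, rfl⟩
          rcases hp with rfl
          exact ⟨he, Sym2.mem_mk_left p q⟩
        have h2 : (G.edgesBetween {x} ({x} : Set V)ᶜ).ncard ≤ 1 :=
          le_trans (Set.ncard_le_ncard hsub (Set.toFinite _)) (incidence_ncard_le G hreg x)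
        rw [Set.ncard_singleton] at h1
        push_cast at h1
        have h2' : ((G.edgesBetween {x} ({x} : Set V)ᶜ).ncard : ℝ) ≤ 1 := by exact_mod_cast h2
        linarith
      obtain ⟨P, props⟩ := build G n 1 hn hreg c₁ hc₁ hexp L W hclose A B hAB hABdisj hle 1
        (by
          intro k hk
          have hk0 : k = 0 := by omega
          subst hk0
          simp only [Nat.mul_zero, Nat.cast_zero, mul_zero]
          rw [hA1]
          norm_num
          exact hc₁)
      refine ⟨1, ?_, P, props⟩
      rw [hA1]
      norm_num
      exact hc₁1
  | (d + 2) =>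
    set D : ℕ := d + 2 with hD
    have hd2 : 2 ≤ D := by omega
    set K : ℕ := ⌈c₁ * A.ncard / (D : ℝ) ^ (2 * L + 1)⌉₊ with hK
    have hnum : ∀ k : ℕ, k < K →
        (D : ℝ) * (∑ i ∈ Finset.range L, (D : ℝ) ^ i) * ((2 * L * k : ℕ) : ℝ) < c₁ * A.ncard := by
      intro k hk
      have hpow : (0 : ℝ) < (D : ℝ) ^ (2 * L + 1) := by positivity
      have h1 : (k : ℝ) < c₁ * A.ncard / (D : ℝ) ^ (2 * L + 1) := by
        by_contra h
        push_neg at h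
        exact absurd (Nat.ceil_le.mpr h) (by omega)
      have h2 : (k : ℝ) * (D : ℝ) ^ (2 * L + 1) < c₁ * A.ncard := by
        rw [← lt_div_iff₀ hpow]
        exact h1
      have hnat : D * (∑ i ∈ Finset.range L, D ^ i) * (2 * L * k) ≤ D ^ (2 * L + 1) * k := by
        calc D * (∑ i ∈ Finset.range L, D ^ i) * (2 * L * k)
            ≤ D * D ^ L * (D ^ L * k) :=
              Nat.mul_le_mul (Nat.mul_le_mul_left _ (geom_le hd2))
                (Nat.mul_le_mul_right _ (twoL_le hd2))
          _ = D ^ (2 * L + 1) * k := by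
              rw [pow_succ', two_mul, pow_add]
              ring
        
      calc (D : ℝ) * (∑ i ∈ Finset.range L, (D : ℝ) ^ i) * ((2 * L * k : ℕ) : ℝ)
          = ((D * (∑ i ∈ Finset.range L, D ^ i) * (2 * L * k) : ℕ) : ℝ) := by push_cast; ring
        _ ≤ ((D ^ (2 * L + 1) * k : ℕ) : ℝ) := by exact_mod_cast hnat
        _ = (k : ℝ) * (D : ℝ) ^ (2 * L + 1) := by push_cast; ring
        _ < c₁ * A.ncard := h2
    obtain ⟨P, props⟩ := build G n D hn hreg c₁ hc₁ hexp L W hclose A B hAB hABdisj hle K hnum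
    exact ⟨K, Nat.le_ceil _, P, props⟩
end
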